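/- arXiv:2110.07032 — 2 statements merged into one kernel-verified Lean document; each statement's English description precedes it below -/
import Mathlib

section
/- Minorization implies contraction on the small set: if there exist ε > 0, a positive integer M, a probability measure ν, and a measurable set C ⊆ X such that (τ^M ∘ δ_x)(A) ≥ ε ν(A) for all measurable A and all x ∈ C, then for any x₁, x₂ ∈ C, ‖τ^M ∘ δ_{x₁} − τ^M ∘ δ_{x₂}‖_TV ≤ 1 − ε. -/
open MeasureTheory ProbabilityTheory

/-- The `N`-step distribution of a Markov kernel `τ` from an initial distribution `ρ`. -/
noncomputable def stepN {X : Type*} [MeasurableSpace X] (τ : Kernel X X) (ρ : Measure X) :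
    ℕ → Measure X
  | 0 => ρ
  | N + 1 => (stepN τ ρ N).bind (fun x => τ x)

/-- The total variation distance between two measures. -/
noncomputable def tvDist {X : Type*} [MeasurableSpace X] (μ ν : Measure X) : ℝ :=
  ⨆ s : {s : Set X // MeasurableSet s}, |(μ s).toReal - (ν s).toReal|

lemma stepN_isProb {X : Type*} [MeasurableSpace X] (τ : Kernel X X) [IsMarkovKernel τ]
    (ρ : Measure X) [IsProbabilityMeasure ρ] (N : ℕ) :
    IsProbabilityMeasure (stepN τ ρ N) := by
  induction N with
  | zero => simpa [stepN] using (inferInstance : IsProbabilityMeasure ρ)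
  | succ n ih =>
    constructor
    rw [stepN, Measure.bind_apply MeasurableSet.univ (Kernel.measurable τ).aemeasurable]
    simp [ih.measure_univ]

theorem minorization_tv_contraction {X : Type*} [MeasurableSpace X]
    (τ : Kernel X X) [IsMarkovKernel τ]
    (ε : ℝ) (hε : 0 < ε) (M : ℕ) (hM : 0 < M)
    (ν : Measure X) [IsProbabilityMeasure ν] (C : Set X) (hC : MeasurableSet C)
    (hminor : ∀ x ∈ C, ∀ A : Set X, MeasurableSet A →
      ENNReal.ofReal ε * ν A ≤ stepN τ (Measure.dirac x) M A)
    (x₁ x₂ : X) (hx₁ : x₁ ∈ C) (hx₂ : x₂ ∈ C) :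
    tvDist (stepN τ (Measure.dirac x₁) M) (stepN τ (Measure.dirac x₂) M) ≤ 1 - ε := by
  set μ₁ := stepN τ (Measure.dirac x₁) M with hμ₁
  set μ₂ := stepN τ (Measure.dirac x₂) M with hμ₂
  have hP₁ : IsProbabilityMeasure μ₁ := stepN_isProb τ _ M
  have hP₂ : IsProbabilityMeasure μ₂ := stepN_isProb τ _ M
  -- real-valued minorization
  have key : ∀ (μ : Measure X), IsProbabilityMeasure μ →
      (∀ A : Set X, MeasurableSet A → ENNReal.ofReal ε * ν A ≤ μ A) →
      ∀ A : Set X, MeasurableSet A → ε * (ν A).toReal ≤ (μ A).toReal := by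
    intro μ hP hm A hA
    have h := hm A hA
    have hfin : μ A ≠ ⊤ := (measure_lt_top μ A).ne
    have := ENNReal.toReal_mono hfin h
    rwa [ENNReal.toReal_mul, ENNReal.toReal_ofReal hε.le] at this
  have k₁ := key μ₁ hP₁ (hminor x₁ hx₁)
  have k₂ := key μ₂ hP₂ (hminor x₂ hx₂)
  have bound : ∀ (μ σ : Measure X), IsProbabilityMeasure μ → IsProbabilityMeasure σ →
      (∀ A : Set X, MeasurableSet A → ε * (ν A).toReal ≤ (μ A).toReal) →
      (∀ A : Set X, MeasurableSet A → ε * (ν A).toReal ≤ (σ A).toReal) →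
      ∀ s : Set X, MeasurableSet s → (μ s).toReal - (σ s).toReal ≤ 1 - ε := by
    intro μ σ hPμ hPσ hmμ hmσ s hs
    have hμs : (μ s).toReal + (μ sᶜ).toReal = 1 := by
      rw [← ENNReal.toReal_add (measure_lt_top μ s).ne (measure_lt_top μ sᶜ).ne,
        measure_add_measure_compl hs, hPμ.measure_univ, ENNReal.toReal_one]
    have hνs : (ν s).toReal + (ν sᶜ).toReal = 1 := by
      rw [← ENNReal.toReal_add (measure_lt_top ν s).ne (measure_lt_top ν sᶜ).ne,
        measure_add_measure_compl hs, measure_univ, ENNReal.toReal_one]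
    have h1 : ε * (ν sᶜ).toReal ≤ (μ sᶜ).toReal := hmμ sᶜ hs.compl
    have h2 : ε * (ν s).toReal ≤ (σ s).toReal := hmσ s hs
    nlinarith
  have hne : Nonempty {s : Set X // MeasurableSet s} := ⟨⟨∅, MeasurableSet.empty⟩⟩
  refine ciSup_le fun s => ?_
  rw [abs_sub_le_iff]
  exact ⟨bound μ₁ μ₂ hP₁ hP₂ k₁ k₂ s.1 s.2, bound μ₂ μ₁ hP₂ hP₁ k₂ k₁ s.1 s.2⟩
end

section
/- Uniform minorization (Doeblin's condition) implies uniform geometric ergodicity: if there exist ε > 0 and a probability measure ν with τ(A | x) ≥ ε ν(A) for all measurable A and all x ∈ X, then τ has a unique invariant probability measure π and ‖τ^N ∘ δ_x − π‖_TV ≤ (1 − ε)^N for all x ∈ X and N ≥ 0. -/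
open MeasureTheory ProbabilityTheory

namespace DoeblinAux

open ENNReal

variable {X : Type*} [MeasurableSpace X]

lemma bind_apply' (μ : Measure X) (τ : Kernel X X) {s : Set X} (hs : MeasurableSet s) :
    μ.bind (fun x => τ x) s = ∫⁻ x, τ x s ∂μ :=
  Measure.bind_apply hs τ.measurable.aemeasurable

lemma isProb_bind (μ : Measure X) [IsProbabilityMeasure μ] (τ : Kernel X X) [IsMarkovKernel τ] :
    IsProbabilityMeasure (μ.bind (fun x => τ x)) := by
  constructor
  rw [bind_apply' μ τ MeasurableSet.univ]
  simp

lemma stepN_prob (τ : Kernel X X) [IsMarkovKernel τ] (ρ : Measure X) [IsProbabilityMeasure ρ]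
    (N : ℕ) : IsProbabilityMeasure (stepN τ ρ N) := by
  induction N with
  | zero => simpa [stepN] using ‹IsProbabilityMeasure ρ›
  | succ N ih => exact isProb_bind (stepN τ ρ N) τ

lemma stepN_invariant (τ : Kernel X X) (π : Measure X) (hinv : π.bind (fun x => τ x) = π)
    (N : ℕ) : stepN τ π N = π := by
  induction N with
  | zero => rfl
  | succ N ih => show (stepN τ π N).bind _ = π; rw [ih, hinv]

lemma tv_le (μ μ' : Measure X) (r : ℝ)
    (hr : ∀ s : Set X, MeasurableSet s → |(μ s).toReal - (μ' s).toReal| ≤ r) :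
    tvDist μ μ' ≤ r := by
  haveI : Nonempty {s : Set X // MeasurableSet s} := ⟨⟨∅, MeasurableSet.empty⟩⟩
  exact ciSup_le fun s => hr s.1 s.2

lemma abs_sub_le_one (μ μ' : Measure X) [IsProbabilityMeasure μ] [IsProbabilityMeasure μ']
    (s : Set X) : |(μ s).toReal - (μ' s).toReal| ≤ 1 := by
  have h1 : (μ s).toReal ≤ 1 := ENNReal.toReal_mono ENNReal.one_ne_top prob_le_one
  have h2 : (μ' s).toReal ≤ 1 := ENNReal.toReal_mono ENNReal.one_ne_top prob_le_one
  have h3 : 0 ≤ (μ s).toReal := ENNReal.toReal_nonneg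
  have h4 : 0 ≤ (μ' s).toReal := ENNReal.toReal_nonneg
  rw [abs_sub_le_iff]; constructor <;> linarith

lemma prob_eq_of_le (μ ν : Measure X) [IsProbabilityMeasure μ] [IsProbabilityMeasure ν]
    (h : ν ≤ μ) : μ = ν := by
  ext s hs
  have h1 : ν s ≤ μ s := Measure.le_iff'.mp h s
  have h2 : ν sᶜ ≤ μ sᶜ := Measure.le_iff'.mp h sᶜ
  have hμ : μ s + μ sᶜ = 1 := by rw [measure_add_measure_compl hs, measure_univ]
  have hν : ν s + ν sᶜ = 1 := by rw [measure_add_measure_compl hs, measure_univ]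
  refine le_antisymm ?_ h1
  have hμs : μ s = 1 - μ sᶜ :=
    ENNReal.eq_sub_of_add_eq (measure_ne_top μ sᶜ) hμ
  have hνs : ν s = 1 - ν sᶜ :=
    ENNReal.eq_sub_of_add_eq (measure_ne_top ν sᶜ) hν
  rw [hμs, hνs]
  exact tsub_le_tsub_left h2 1

section Minor

variable (τ : Kernel X X) [IsMarkovKernel τ] (ε : ℝ) (ν : Measure X) [IsProbabilityMeasure ν]

lemma smul_le
    (hminor : ∀ x : X, ∀ A : Set X, MeasurableSet A → ENNReal.ofReal ε * ν A ≤ τ x A)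
    (x : X) : ENNReal.ofReal ε • ν ≤ τ x := by
  rw [Measure.le_iff]
  intro s hs
  simpa using hminor x s hs

lemma finNu : IsFiniteMeasure (ENNReal.ofReal ε • ν) :=
  ν.smul_finite ENNReal.ofReal_ne_top

/-- The residual kernel `κ` with `τ = ε ν + (1 - ε) κ`. -/
noncomputable def kappa
    (hminor : ∀ x : X, ∀ A : Set X, MeasurableSet A → ENNReal.ofReal ε * ν A ≤ τ x A) :
    Kernel X X where
  toFun x := (ENNReal.ofReal (1 - ε))⁻¹ • (τ x - ENNReal.ofReal ε • ν)
  measurable' := by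
    haveI := finNu (X := X) ε ν
    apply Measure.measurable_of_measurable_coe
    intro s hs
    simp only [Measure.smul_apply, smul_eq_mul,
      Measure.sub_apply hs (smul_le τ ε ν hminor _)]
    exact ((Measure.measurable_coe hs).comp τ.measurable |>.sub measurable_const).const_mul _

variable (hminor : ∀ x : X, ∀ A : Set X, MeasurableSet A → ENNReal.ofReal ε * ν A ≤ τ x A)

lemma kappa_apply (x : X) :
    kappa τ ε ν hminor x = (ENNReal.ofReal (1 - ε))⁻¹ • (τ x - ENNReal.ofReal ε • ν) := rfl

lemma kappa_decomp (hε : 0 < ε) (hε1 : ε < 1) (x : X) :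
    (τ x : Measure X) = ENNReal.ofReal ε • ν + ENNReal.ofReal (1 - ε) • kappa τ ε ν hminor x := by
  haveI := finNu (X := X) ε ν
  have hc0 : ENNReal.ofReal (1 - ε) ≠ 0 := by
    simp [ENNReal.ofReal_eq_zero]; linarith
  rw [kappa_apply, smul_smul, ENNReal.mul_inv_cancel hc0 ENNReal.ofReal_ne_top, one_smul,
    add_comm, Measure.sub_add_cancel_of_le (smul_le τ ε ν hminor x)]

lemma kappa_markov (hε : 0 < ε) (hε1 : ε < 1) : IsMarkovKernel (kappa τ ε ν hminor) := by
  haveI := finNu (X := X) ε ν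
  constructor
  intro x
  constructor
  rw [kappa_apply]
  simp only [Measure.smul_apply, smul_eq_mul,
    Measure.sub_apply MeasurableSet.univ (smul_le τ ε ν hminor x)]
  have : (τ x) Set.univ - ENNReal.ofReal ε * ν Set.univ = ENNReal.ofReal (1 - ε) := by
    simp [measure_univ, ENNReal.ofReal_sub _ hε.le, ENNReal.ofReal_one]
  rw [this, ENNReal.inv_mul_cancel (by simp [ENNReal.ofReal_eq_zero]; linarith)
    ENNReal.ofReal_ne_top]

end Minor

section Decomp
variable (τ κ : Kernel X X) [IsMarkovKernel τ] [IsMarkovKernel κ]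
  (ν : Measure X) [IsProbabilityMeasure ν] (e c : ℝ≥0∞)

lemma bind_decomp (hdec : ∀ x, (τ x : Measure X) = e • ν + c • κ x)
    (μ : Measure X) [IsProbabilityMeasure μ] {s : Set X} (hs : MeasurableSet s) :
    μ.bind (fun x => τ x) s = e * ν s + c * μ.bind (fun x => κ x) s := by
  rw [bind_apply' μ τ hs, bind_apply' μ κ hs]
  have : ∀ x, (τ x) s = e * ν s + c * (κ x) s := by
    intro x
    rw [hdec x]
    simp [Measure.smul_apply]
  simp only [this]
  rw [lintegral_add_left measurable_const, lintegral_const,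
    lintegral_const_mul _ (κ.measurable_coe hs), measure_univ, mul_one]

/-- The part of `stepN τ ρ N` not depending on `ρ`. -/
noncomputable def mSeq : ℕ → Measure X
  | 0 => 0
  | N + 1 => (mSeq N).bind (fun x => τ x) + (c ^ N * e) • ν

lemma stepN_decomp (hdec : ∀ x, (τ x : Measure X) = e • ν + c • κ x)
    (ρ : Measure X) [IsProbabilityMeasure ρ] (N : ℕ) :
    stepN τ ρ N = mSeq τ ν e c N + c ^ N • stepN κ ρ N := by
  induction N with
  | zero => simp [stepN, mSeq]
  | succ N ih =>
    haveI := stepN_prob κ ρ N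
    ext s hs
    have h1 : stepN τ ρ (N + 1) s = ∫⁻ x, (τ x) s ∂(stepN τ ρ N) :=
      bind_apply' _ τ hs
    rw [h1, ih, lintegral_add_measure, lintegral_smul_measure]
    have h2 : ∫⁻ x, (τ x) s ∂(mSeq τ ν e c N) = (mSeq τ ν e c N).bind (fun x => τ x) s :=
      (bind_apply' _ τ hs).symm
    have h3 : ∫⁻ x, (τ x) s ∂(stepN κ ρ N) = e * ν s + c * stepN κ ρ (N + 1) s := by
      rw [← bind_apply' _ τ hs]
      exact bind_decomp τ κ ν e c hdec (stepN κ ρ N) hs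
    rw [h2, h3]
    show _ = (mSeq τ ν e c (N + 1)) s + (c ^ (N + 1) • stepN κ ρ (N + 1)) s
    simp only [mSeq, Measure.add_apply, Measure.smul_apply, smul_eq_mul]
    ring

/-- The key total-variation-style estimate. -/
lemma abs_sub_le_pow (hdec : ∀ x, (τ x : Measure X) = e • ν + c • κ x) (hcfin : c ≠ ⊤)
    (ρ₁ ρ₂ : Measure X) [IsProbabilityMeasure ρ₁] [IsProbabilityMeasure ρ₂] (N : ℕ)
    {s : Set X} (hs : MeasurableSet s) :
    |(stepN τ ρ₁ N s).toReal - (stepN τ ρ₂ N s).toReal| ≤ c.toReal ^ N := by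
  haveI := stepN_prob κ ρ₁ N
  haveI := stepN_prob κ ρ₂ N
  have hd1 := stepN_decomp τ κ ν e c hdec ρ₁ N
  have hd2 := stepN_decomp τ κ ν e c hdec ρ₂ N
  set m := mSeq τ ν e c N with hm
  haveI := stepN_prob τ ρ₁ N
  have hmfin : m s ≠ ⊤ := by
    intro h
    apply measure_ne_top (stepN τ ρ₁ N) s
    rw [hd1, Measure.add_apply, h, top_add]
  have hc1 : c ^ N * stepN κ ρ₁ N s ≠ ⊤ :=
    ENNReal.mul_ne_top (ENNReal.pow_ne_top hcfin) (measure_ne_top _ s)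
  have hc2 : c ^ N * stepN κ ρ₂ N s ≠ ⊤ :=
    ENNReal.mul_ne_top (ENNReal.pow_ne_top hcfin) (measure_ne_top _ s)
  have e1 : (stepN τ ρ₁ N s).toReal
      = (m s).toReal + c.toReal ^ N * (stepN κ ρ₁ N s).toReal := by
    rw [hd1, Measure.add_apply, Measure.smul_apply, smul_eq_mul,
      ENNReal.toReal_add hmfin hc1, ENNReal.toReal_mul, ENNReal.toReal_pow]
  have e2 : (stepN τ ρ₂ N s).toReal
      = (m s).toReal + c.toReal ^ N * (stepN κ ρ₂ N s).toReal := by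
    rw [hd2, Measure.add_apply, Measure.smul_apply, smul_eq_mul,
      ENNReal.toReal_add hmfin hc2, ENNReal.toReal_mul, ENNReal.toReal_pow]
  rw [e1, e2]
  have hpow : (0:ℝ) ≤ c.toReal ^ N := pow_nonneg ENNReal.toReal_nonneg N
  calc |(m s).toReal + c.toReal ^ N * (stepN κ ρ₁ N s).toReal
        - ((m s).toReal + c.toReal ^ N * (stepN κ ρ₂ N s).toReal)|
      = c.toReal ^ N * |(stepN κ ρ₁ N s).toReal - (stepN κ ρ₂ N s).toReal| := by
        rw [show (m s).toReal + c.toReal ^ N * (stepN κ ρ₁ N s).toReal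
            - ((m s).toReal + c.toReal ^ N * (stepN κ ρ₂ N s).toReal)
            = c.toReal ^ N * ((stepN κ ρ₁ N s).toReal - (stepN κ ρ₂ N s).toReal) by ring,
          abs_mul, abs_of_nonneg hpow]
    _ ≤ c.toReal ^ N * 1 :=
        mul_le_mul_of_nonneg_left (abs_sub_le_one _ _ s) hpow
    _ = c.toReal ^ N := mul_one _

end Decomp

section Pi
variable (τ κ : Kernel X X) [IsMarkovKernel τ] [IsMarkovKernel κ]
  (ν : Measure X) [IsProbabilityMeasure ν] (e c : ℝ≥0∞)

lemma tsum_coef (hec : e + c = 1) (he0 : e ≠ 0) : ∑' n : ℕ, c ^ n * e = 1 := by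
  have hetop : e ≠ ∞ := by
    intro h; rw [h] at hec; simp at hec
  have hctop : c ≠ ∞ := by
    intro h; rw [h] at hec; simp at hec
  have hc : (1 : ℝ≥0∞) - c = e := by
    rw [← hec, ENNReal.add_sub_cancel_right hctop]
  rw [ENNReal.tsum_mul_right, ENNReal.tsum_geometric, hc, ENNReal.inv_mul_cancel he0 hetop]

/-- The candidate invariant measure. -/
noncomputable def piMeasure : Measure X :=
  Measure.sum (fun n : ℕ => (c ^ n * e) • stepN κ ν n)

lemma piMeasure_apply {s : Set X} (hs : MeasurableSet s) :
    piMeasure κ ν e c s = ∑' n : ℕ, c ^ n * e * stepN κ ν n s := by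
  rw [piMeasure, Measure.sum_apply _ hs]
  simp [Measure.smul_apply]

lemma piMeasure_prob (hec : e + c = 1) (he0 : e ≠ 0) :
    IsProbabilityMeasure (piMeasure κ ν e c) := by
  constructor
  rw [piMeasure_apply κ ν e c MeasurableSet.univ]
  have : ∀ n : ℕ, stepN κ ν n Set.univ = 1 := fun n => (stepN_prob κ ν n).measure_univ
  simp only [this, mul_one]
  exact tsum_coef e c hec he0

lemma piMeasure_invariant (hec : e + c = 1) (he0 : e ≠ 0)
    (hdec : ∀ x, (τ x : Measure X) = e • ν + c • κ x) :
    (piMeasure κ ν e c).bind (fun x => τ x) = piMeasure κ ν e c := by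
  ext s hs
  conv_lhs => rw [bind_apply' _ τ hs, piMeasure, lintegral_sum_measure]
  have hterm : ∀ n : ℕ, ∫⁻ x, (τ x) s ∂((c ^ n * e) • stepN κ ν n)
      = c ^ n * e * (e * ν s) + c ^ (n + 1) * e * stepN κ ν (n + 1) s := by
    intro n
    haveI := stepN_prob κ ν n
    rw [lintegral_smul_measure, ← bind_apply' _ τ hs,
      bind_decomp τ κ ν e c hdec (stepN κ ν n) hs]
    have : stepN κ ν (n + 1) = (stepN κ ν n).bind (fun x => κ x) := by rw [stepN]
    rw [← this]
    ring
  simp only [hterm]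
  rw [ENNReal.tsum_add, ENNReal.tsum_mul_right, tsum_coef e c hec he0, one_mul]
  have hsum : piMeasure κ ν e c s
      = c ^ 0 * e * stepN κ ν 0 s + ∑' n : ℕ, c ^ (n + 1) * e * stepN κ ν (n + 1) s := by
    rw [piMeasure_apply κ ν e c hs]
    exact tsum_eq_zero_add' ENNReal.summable
  rw [hsum]
  have : stepN κ ν 0 = ν := rfl
  rw [this, pow_zero, one_mul]

end Pi

end DoeblinAux

open DoeblinAux

theorem doeblin_uniform_geometric_ergodicity {X : Type*} [MeasurableSpace X]
    (τ : Kernel X X) [IsMarkovKernel τ]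
    (ε : ℝ) (hε : 0 < ε) (ν : Measure X) [IsProbabilityMeasure ν]
    (hminor : ∀ x : X, ∀ A : Set X, MeasurableSet A →
      ENNReal.ofReal ε * ν A ≤ τ x A) :
    ∃ π : Measure X, IsProbabilityMeasure π ∧ π.bind (fun x => τ x) = π ∧
      (∀ π' : Measure X, IsProbabilityMeasure π' → π'.bind (fun x => τ x) = π' → π' = π) ∧
      ∀ (x : X) (N : ℕ), tvDist (stepN τ (Measure.dirac x) N) π ≤ (1 - ε) ^ N := by
  have hne : Nonempty X := by
    rcases isEmpty_or_nonempty X with h | h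
    · exfalso
      have h1 : ν Set.univ = 1 := measure_univ
      rw [Set.univ_eq_empty_iff.mpr h] at h1
      simp at h1
    · exact h
  obtain ⟨x0⟩ := hne
  have hε1 : ε ≤ 1 := by
    have h := hminor x0 Set.univ MeasurableSet.univ
    rw [measure_univ, mul_one] at h
    have h2 : (τ x0) Set.univ = 1 := measure_univ
    rw [h2] at h
    exact ENNReal.ofReal_le_one.mp h
  rcases lt_or_eq_of_le hε1 with hlt | heq
  · -- main case : ε < 1
    have hec : ENNReal.ofReal ε + ENNReal.ofReal (1 - ε) = 1 := by
      rw [← ENNReal.ofReal_add hε.le (by linarith)]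
      norm_num
    have he0 : ENNReal.ofReal ε ≠ 0 := by
      simp only [ne_eq, ENNReal.ofReal_eq_zero, not_le]
      exact hε
    have hcfin : ENNReal.ofReal (1 - ε) ≠ ⊤ := ENNReal.ofReal_ne_top
    haveI hκM : IsMarkovKernel (kappa τ ε ν hminor) := kappa_markov τ ε ν hminor hε hlt
    have hdec := kappa_decomp τ ε ν hminor hε hlt
    set κ := kappa τ ε ν hminor with hκ
    set e := ENNReal.ofReal ε with hee
    set c := ENNReal.ofReal (1 - ε) with hcc
    haveI hπprob : IsProbabilityMeasure (piMeasure κ ν e c) := piMeasure_prob κ ν e c hec he0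
    have hinv : (piMeasure κ ν e c).bind (fun x => τ x) = piMeasure κ ν e c :=
      piMeasure_invariant τ κ ν e c hec he0 hdec
    refine ⟨piMeasure κ ν e c, hπprob, hinv, ?_, ?_⟩
    · intro π' hπ' hinv'
      haveI := hπ'
      ext s hs
      have key : ∀ N : ℕ, |(π' s).toReal - (piMeasure κ ν e c s).toReal| ≤ (1 - ε) ^ N := by
        intro N
        have h := abs_sub_le_pow τ κ ν e c hdec hcfin π' (piMeasure κ ν e c) N hs
        rwa [stepN_invariant τ π' hinv' N, stepN_invariant τ (piMeasure κ ν e c) hinv N,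
          hcc, ENNReal.toReal_ofReal (by linarith)] at h
      have hlim : Filter.Tendsto (fun N : ℕ => (1 - ε) ^ N) Filter.atTop (nhds 0) :=
        tendsto_pow_atTop_nhds_zero_of_lt_one (by linarith) (by linarith)
      have h0 : |(π' s).toReal - (piMeasure κ ν e c s).toReal| ≤ 0 :=
        ge_of_tendsto hlim (Filter.Eventually.of_forall key)
      have h1 : (π' s).toReal = (piMeasure κ ν e c s).toReal := by
        have h2 := abs_nonneg ((π' s).toReal - (piMeasure κ ν e c s).toReal)
        have h3 : |(π' s).toReal - (piMeasure κ ν e c s).toReal| = 0 := le_antisymm h0 h2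
        rw [abs_eq_zero, sub_eq_zero] at h3
        exact h3
      exact (ENNReal.toReal_eq_toReal_iff' (measure_ne_top π' s)
        (measure_ne_top (piMeasure κ ν e c) s)).mp h1
    · intro x N
      apply tv_le
      intro s hs
      have h := abs_sub_le_pow τ κ ν e c hdec hcfin (Measure.dirac x) (piMeasure κ ν e c) N hs
      rwa [stepN_invariant τ (piMeasure κ ν e c) hinv N, hcc,
        ENNReal.toReal_ofReal (by linarith)] at h
  · -- degenerate case : ε = 1
    subst heq
    have hτν : ∀ x, (τ x : Measure X) = ν := by
      intro x
      refine prob_eq_of_le (τ x) ν ?_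
      have h := smul_le τ 1 ν hminor x
      simpa [ENNReal.ofReal_one] using h
    have hbind : ∀ (μ : Measure X), IsProbabilityMeasure μ → μ.bind (fun x => τ x) = ν := by
      intro μ hμ
      ext s hs
      rw [bind_apply' μ τ hs]
      simp only [hτν]
      rw [lintegral_const, hμ.measure_univ, mul_one]
    refine ⟨ν, inferInstance, hbind ν inferInstance, ?_, ?_⟩
    · intro π' h1 h2
      rw [← h2, hbind π' h1]
    · intro x N
      cases N with
      | zero =>
        haveI := stepN_prob τ (Measure.dirac x) 0
        rw [pow_zero]
        exact tv_le _ _ 1 fun s hs => abs_sub_le_one _ _ s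
      | succ N =>
        have hstep : ∀ M : ℕ, stepN τ (Measure.dirac x) (M + 1) = ν := by
          intro M
          induction M with
          | zero =>
            haveI := stepN_prob τ (Measure.dirac x) 0
            exact hbind _ this
          | succ M ih =>
            show (stepN τ (Measure.dirac x) (M + 1)).bind _ = ν
            rw [ih]
            exact hbind ν inferInstance
        rw [hstep N]
        have h0 : tvDist ν ν ≤ 0 := tv_le ν ν 0 fun s hs => by simp
        calc tvDist ν ν ≤ 0 := h0
          _ ≤ (1 - 1) ^ (N + 1) := by norm_num
end
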